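/- arXiv:1502.05341 — 12 statements merged into one kernel-verified Lean document; each statement's English description precedes it below -/
import Mathlib

section
/- Let A be a right alternative metabelian algebra over a field of characteristic ≠ 2. Then for all a, b, x, y ∈ A one has ((ab)·x)·y + ((ab)·y)·x = 0 (right multiplication operators anticommute on A²). -/
theorem stmt_1 {F A : Type*} [Field F] [NonUnitalNonAssocRing A]
    [Module F A] [SMulCommClass F A A] [IsScalarTower F A A]
    (hchar : (2 : F) ≠ 0)
    (hra : ∀ x y z : A, ((x * y) * z - x * (y * z)) + ((x * z) * y - x * (z * y)) = 0)
    (hme : ∀ x y z t : A, (x * y) * (z * t) = 0)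
    (a b x y : A) : ((a * b) * x) * y + ((a * b) * y) * x = 0 := by
  have h := hra (a * b) x y
  have h1 := hme a b x y
  have h2 := hme a b y x
  rw [h1, h2] at h
  simpa using h
end

section
/- Let A be a right alternative metabelian algebra over a field of characteristic ≠ 2. Then for every w ∈ A·A (a product of two elements) and all x, y ∈ A: y·(w·x) + y·(x·w) = (y·w)·x. Equivalently, on A² the operator identity [R_x, L_y] = −L_x L_y holds, where R_x(a) = a·x, L_x(a) = x·a. -/
theorem stmt_2 {F A : Type*} [Field F] [NonUnitalNonAssocRing A]
    [Module F A] [SMulCommClass F A A] [IsScalarTower F A A]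
    (hchar : (2 : F) ≠ 0)
    (hra : ∀ x y z : A, ((x * y) * z - x * (y * z)) + ((x * z) * y - x * (z * y)) = 0)
    (hme : ∀ x y z t : A, (x * y) * (z * t) = 0)
    (a b x y : A) : y * ((a * b) * x) + y * (x * (a * b)) = (y * (a * b)) * x := by
  have h := hra y (a * b) x
  rw [hme y x a b, zero_sub] at h
  linear_combination (norm := abel) -h
end

section
/- Let A be a right alternative metabelian algebra over a field of characteristic ≠ 2. Then for every w = ab with a,b ∈ A and all x, y, z ∈ A: z·((w·x)·y) = ((z·w)·x)·y (the operator R_x R_y commutes with every L_z on A²). -/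
theorem stmt_3 {F A : Type*} [Field F] [NonUnitalNonAssocRing A]
    [Module F A] [SMulCommClass F A A] [IsScalarTower F A A]
    (hchar : (2 : F) ≠ 0)
    (hra : ∀ x y z : A, ((x * y) * z - x * (y * z)) + ((x * z) * y - x * (z * y)) = 0)
    (hme : ∀ x y z t : A, (x * y) * (z * t) = 0)
    (a b x y z : A) : z * (((a * b) * x) * y) = ((z * (a * b)) * x) * y := by
  set w := a * b with hw
  -- E2 : for any (explicit) product p*q, ((p*q)*u)*v + ((p*q)*v)*u = 0
  have e2 : ∀ p q u v : A, ((p * q) * u) * v + ((p * q) * v) * u = 0 := by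
    intro p q u v
    have h := hra (p * q) u v
    rw [hme p q u v, hme p q v u] at h
    linear_combination (norm := abel) h
  have h1 : ((z * w) * x) * y + ((z * w) * y) * x = 0 := e2 z w x y
  have h2 : (w * x) * y + (w * y) * x = 0 := e2 a b x y
  have h2z : z * ((w * x) * y) + z * ((w * y) * x) = 0 := by
    have := congrArg (fun t => z * t) h2
    simpa [mul_add] using this
  -- Key claim: ((zw)u)v - z((wu)v) = z((uw)v) + z((vw)u), symmetric in u,v
  have K : ∀ u v : A, ((z * w) * u) * v - z * ((w * u) * v)
      = z * ((u * w) * v) + z * ((v * w) * u) := by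
    intro u v
    -- (z, w*u, v) = -(z, v, w*u) and (z*v)*(w*u) = 0
    have hA : z * ((w * u) * v) = (z * (w * u)) * v - z * (v * (w * u)) := by
      have h := hra z (w * u) v
      have h0' : (z * v) * (w * u) = 0 := by rw [hw]; exact hme z v (a * b) u
      rw [h0'] at h
      linear_combination (norm := abel) -h
    -- z*(w*u) = (z*w)*u - z*(u*w)
    have hB : z * (w * u) = (z * w) * u - z * (u * w) := by
      have h := hra z w u
      have h0 : (z * u) * w = 0 := by rw [hw]; exact hme z u a b
      rw [h0] at h
      linear_combination (norm := abel) -h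
    have hBv : (z * (w * u)) * v = ((z * w) * u) * v - (z * (u * w)) * v := by
      rw [hB, sub_mul]
    -- v*(w*u) = (v*w)*u - v*(u*w)
    have hC : v * (w * u) = (v * w) * u - v * (u * w) := by
      have h := hra v w u
      have h0 : (v * u) * w = 0 := by rw [hw]; exact hme v u a b
      rw [h0] at h
      linear_combination (norm := abel) -h
    have hCz : z * (v * (w * u)) = z * ((v * w) * u) - z * (v * (u * w)) := by
      rw [hC, mul_sub]
    -- (z*(u*w))*v - z*(v*(u*w)) = z*((u*w)*v)
    have hD : (z * (u * w)) * v - z * (v * (u * w)) = z * ((u * w) * v) := by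
      have h := hra z v (u * w)
      have h0 : (z * v) * (u * w) = 0 := by rw [hw]; exact hme z v u (a * b)
      rw [h0] at h
      linear_combination (norm := abel) h
    linear_combination (norm := abel) (-hA) - hBv + hCz + hD
  have hsym : ((z * w) * x) * y - z * ((w * x) * y)
      = ((z * w) * y) * x - z * ((w * y) * x) := by
    linear_combination (norm := abel) K x y - K y x
  have h2g : (((z * w) * x) * y - z * ((w * x) * y))
      + (((z * w) * x) * y - z * ((w * x) * y)) = 0 := by
    linear_combination (norm := abel) hsym + h1 - h2z
  have hg : ((z * w) * x) * y - z * ((w * x) * y) = 0 := by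
    have h2' : (2 : F) • (((z * w) * x) * y - z * ((w * x) * y)) = 0 := by
      rw [two_smul]; linear_combination (norm := abel) h2g
    have h3 := congrArg (fun t => (2⁻¹ : F) • t) h2'
    simpa [smul_smul, inv_mul_cancel₀ hchar] using h3
  linear_combination (norm := abel) -hg
end

section
/- Let A be a right alternative metabelian algebra over a field of characteristic ≠ 2. Then for every w ∈ A·A and all x, y, z ∈ A: ((w·x)·y)·z = ((w·z)·x)·y. In particular the product R_x R_y of two right multiplications lies in the center of the multiplication algebra acting on A². -/
theorem stmt_4 {F A : Type*} [Field F] [NonUnitalNonAssocRing A]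
    [Module F A] [SMulCommClass F A A] [IsScalarTower F A A]
    (hchar : (2 : F) ≠ 0)
    (hra : ∀ x y z : A, ((x * y) * z - x * (y * z)) + ((x * z) * y - x * (z * y)) = 0)
    (hme : ∀ x y z t : A, (x * y) * (z * t) = 0)
    (a b x y z : A) : (((a * b) * x) * y) * z = (((a * b) * z) * x) * y := by
  have key : ∀ p q u v : A, ((p * q) * u) * v = -(((p * q) * v) * u) := by
    intro p q u v
    have h := hra (p * q) u v
    rw [hme, hme, sub_zero, sub_zero] at h
    exact eq_neg_of_add_eq_zero_left h
  rw [key (a * b) x y z, key a b z x, neg_mul]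
end

section
/- Let A be a right alternative metabelian algebra over a field of characteristic ≠ 2. Set H_x = R_x − L_x. Then on A² the operator identity H_x H_y = R_x R_y − 2[R_x, L_y] − L_x R_y − L_y R_x holds; i.e., for every w ∈ A·A and all x,y ∈ A, applying both sides to w (operators composed left-to-right) gives equal elements of A. -/
theorem stmt_5 {F A : Type*} [Field F] [NonUnitalNonAssocRing A]
    [Module F A] [SMulCommClass F A A] [IsScalarTower F A A]
    (hchar : (2 : F) ≠ 0)
    (hra : ∀ x y z : A, ((x * y) * z - x * (y * z)) + ((x * z) * y - x * (z * y)) = 0)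
    (hme : ∀ x y z t : A, (x * y) * (z * t) = 0)
    (a b x y : A) :
    (((a * b) * x - x * (a * b)) * y) - y * ((a * b) * x - x * (a * b)) =
      ((a * b) * x) * y
        - 2 • (y * ((a * b) * x) - (y * (a * b)) * x)
        - (x * (a * b)) * y - (y * (a * b)) * x := by
  have h1 := hra y (a * b) x
  have h2 := hme y x a b
  rw [two_smul, sub_mul, mul_sub]
  linear_combination (norm := abel) (-1:ℤ) • h1 + (1:ℤ) • h2
end

section
/- Let A be a right alternative metabelian algebra over a field of characteristic ≠ 2. With H_x = R_x − L_x, the operator identity 3 R_x R_y + H_x H_y = 2[R_x, H_y] + H_x R_y + H_y R_x holds on A²: for every w ∈ A·A and all x,y ∈ A both sides applied to w agree. -/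
theorem stmt_6 {F A : Type*} [Field F] [NonUnitalNonAssocRing A]
    [Module F A] [SMulCommClass F A A] [IsScalarTower F A A]
    (hchar : (2 : F) ≠ 0)
    (hra : ∀ x y z : A, ((x * y) * z - x * (y * z)) + ((x * z) * y - x * (z * y)) = 0)
    (hme : ∀ x y z t : A, (x * y) * (z * t) = 0)
    (a b x y : A) :
    3 • (((a * b) * x) * y)
      + ((((a * b) * x - x * (a * b)) * y) - y * ((a * b) * x - x * (a * b))) =
    2 • ((((a * b) * x) * y - y * ((a * b) * x))
          - (((a * b) * y - y * (a * b)) * x))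
      + (((a * b) * x - x * (a * b)) * y)
      + (((a * b) * y - y * (a * b)) * x) := by
  have h1 := hra (a * b) x y
  rw [hme a b x y, hme a b y x, sub_zero, sub_zero] at h1
  have e1 : ((a * b) * x) * y = -(((a * b) * y) * x) := add_eq_zero_iff_eq_neg.mp h1
  have h2 := hra y (a * b) x
  rw [hme y x a b, zero_sub] at h2
  have e2 : (y * (a * b)) * x = y * ((a * b) * x) + y * (x * (a * b)) := by
    rw [← sub_eq_zero, ← h2]; abel
  rw [sub_mul, sub_mul, mul_sub, e1, e2]
  abel
end

section
/- Let A be a right alternative metabelian algebra over a field of characteristic ≠ 2. Then for all x, y ∈ A: y·(x²·x) = 0, i.e., the cube of any element annihilates A from the right side of multiplication (y·x³ = 0 for all y). -/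
theorem stmt_7 {F A : Type*} [Field F] [NonUnitalNonAssocRing A]
    [Module F A] [SMulCommClass F A A] [IsScalarTower F A A]
    (hchar : (2 : F) ≠ 0)
    (hra : ∀ x y z : A, ((x * y) * z - x * (y * z)) + ((x * z) * y - x * (z * y)) = 0)
    (hme : ∀ x y z t : A, (x * y) * (z * t) = 0)
    (x y : A) : y * ((x * x) * x) = 0 := by
  have key : ∀ a : A, a + a = 0 → a = 0 := by
    intro a h
    have h2 : (2 : F) • a = 0 := by rw [two_smul]; exact h
    have := congrArg (fun b => (2 : F)⁻¹ • b) h2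
    simpa [smul_smul, inv_mul_cancel₀ hchar] using this
  -- right alternativity: (ab)b = a(bb)
  have h1 : ∀ a b : A, (a * b) * b = a * (b * b) := by
    intro a b
    have h := key _ (hra a b b)
    exact sub_eq_zero.mp h
  -- (y·x²)·x = 0
  have h2 : (y * (x * x)) * x = 0 := by
    rw [← h1 y x]
    rw [h1 (y * x) x]
    exact hme y x x x
  -- expand hra y (x*x) x
  have h3 := hra y (x * x) x
  rw [h2, hme y x x x, h1 x x] at h3
  simp only [zero_sub] at h3
  have h4 := key _ h3
  rw [h1 x x]
  exact neg_eq_zero.mp h4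
end

section
/- Let A be a right alternative metabelian algebra over a field of characteristic ≠ 2,3. Then the full linearization of y·x³ = 0 holds: for all y, x₁, x₂, x₃ ∈ A, the sum over all six permutations σ of {1,2,3} of y·((x_{σ(1)}·x_{σ(2)})·x_{σ(3)}) equals 0. -/
/-- Key algebraic identity: twice the six-term linearization sum vanishes in a
right alternative metabelian ring. -/
theorem stmt_8_aux {A : Type*} [NonUnitalNonAssocRing A]
    (hra : ∀ x y z : A, ((x * y) * z - x * (y * z)) + ((x * z) * y - x * (z * y)) = 0)
    (hme : ∀ x y z t : A, (x * y) * (z * t) = 0)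
    (y a b c : A) :
    (y * ((a*b)*c) + y * ((a*c)*b) + y * ((b*a)*c) + y * ((b*c)*a)
      + y * ((c*a)*b) + y * ((c*b)*a))
    + (y * ((a*b)*c) + y * ((a*c)*b) + y * ((b*a)*c) + y * ((b*c)*a)
      + y * ((c*a)*b) + y * ((c*b)*a)) = 0 := by
  have Aa := congrArg (y * ·) (hra a b c)
  have Ab := congrArg (y * ·) (hra b a c)
  have Ac := congrArg (y * ·) (hra c a b)
  simp only [mul_add, mul_sub, mul_zero] at Aa Ab Ac
  have B1 := hra y (b*c) a; rw [hme y a b c] at B1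
  have B2 := hra y (c*b) a; rw [hme y a c b] at B2
  have B3 := hra y (a*c) b; rw [hme y b a c] at B3
  have B4 := hra y (c*a) b; rw [hme y b c a] at B4
  have B5 := hra y (a*b) c; rw [hme y c a b] at B5
  have B6 := hra y (b*a) c; rw [hme y c b a] at B6
  have C1 := congrArg (· * a) (hra y b c)
  have C2 := congrArg (· * b) (hra y a c)
  have C3 := congrArg (· * c) (hra y a b)
  simp only [add_mul, sub_mul, zero_mul] at C1 C2 C3
  have Da := hra (y*a) b c; rw [hme y a b c, hme y a c b] at Da
  have Db := hra (y*b) a c; rw [hme y b a c, hme y b c a] at Db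
  have Dc := hra (y*c) a b; rw [hme y c a b, hme y c b a] at Dc
  linear_combination (norm := abel) Aa + Ab + Ac - B1 - B2 - B3 - B4 - B5 - B6
    - C1 - C2 - C3 + Da + Db + Dc

/-- full linearization of y·x³ = 0 in a right alternative
metabelian algebra over a field of characteristic ≠ 2,3. -/
theorem stmt_8 {F A : Type*} [Field F] [NonUnitalNonAssocRing A]
    [Module F A] [SMulCommClass F A A] [IsScalarTower F A A]
    (hchar2 : (2 : F) ≠ 0) (hchar3 : (3 : F) ≠ 0)
    (hra : ∀ x y z : A, ((x * y) * z - x * (y * z)) + ((x * z) * y - x * (z * y)) = 0)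
    (hme : ∀ x y z t : A, (x * y) * (z * t) = 0)
    (y : A) (x : Fin 3 → A) :
    ∑ σ : Equiv.Perm (Fin 3), y * ((x (σ 0) * x (σ 1)) * x (σ 2)) = 0 := by
  set a := x 0 with ha
  set b := x 1 with hb
  set c := x 2 with hc
  have hsum : ∑ σ : Equiv.Perm (Fin 3), y * ((x (σ 0) * x (σ 1)) * x (σ 2)) =
      y * ((a*b)*c) + y * ((a*c)*b) + y * ((b*a)*c) + y * ((b*c)*a)
      + y * ((c*a)*b) + y * ((c*b)*a) := by
    rw [show (Finset.univ : Finset (Equiv.Perm (Fin 3))) =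
      {1, Equiv.swap 0 1, Equiv.swap 0 2, Equiv.swap 1 2,
       Equiv.swap 0 1 * Equiv.swap 1 2, Equiv.swap 1 2 * Equiv.swap 0 1} from by decide]
    rw [Finset.sum_insert (by decide), Finset.sum_insert (by decide),
        Finset.sum_insert (by decide), Finset.sum_insert (by decide),
        Finset.sum_insert (by decide), Finset.sum_singleton]
    simp (config := { decide := true }) [Equiv.swap_apply_def, Equiv.Perm.mul_apply,
      ← ha, ← hb, ← hc]
    abel
  rw [hsum]
  set S := y * ((a*b)*c) + y * ((a*c)*b) + y * ((b*a)*c) + y * ((b*c)*a)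
      + y * ((c*a)*b) + y * ((c*b)*a) with hS
  have h2 : S + S = 0 := stmt_8_aux hra hme y a b c
  have h3 : (2 : F) • S = 0 := by rw [two_smul]; exact h2
  have h4 := congrArg (fun z => (2 : F)⁻¹ • z) h3
  simpa [smul_smul, inv_mul_cancel₀ hchar2] using h4
end

section
/- Let A be a right alternative metabelian algebra over a field of characteristic ≠ 2. Then for all x, y ∈ A: ((x·y)·x)·y + (x·(y·y))·x = 0. -/
theorem stmt_9 {F A : Type*} [Field F] [NonUnitalNonAssocRing A]
    [Module F A] [SMulCommClass F A A] [IsScalarTower F A A]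
    (hchar : (2 : F) ≠ 0)
    (hra : ∀ x y z : A, ((x * y) * z - x * (y * z)) + ((x * z) * y - x * (z * y)) = 0)
    (hme : ∀ x y z t : A, (x * y) * (z * t) = 0)
    (x y : A) : ((x * y) * x) * y + (x * (y * y)) * x = 0 := by
  have h2 : ∀ v : A, v + v = 0 → v = 0 := by
    intro v hv
    have h2v : (2 : F) • v = 0 := by
      rw [two_smul]; exact hv
    have := congrArg (fun w => (2 : F)⁻¹ • w) h2v
    simpa [inv_smul_smul₀ hchar] using this
  have key : (x * y) * y = x * (y * y) := by
    have h := hra x y y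
    exact sub_eq_zero.mp (h2 _ h)
  have h := hra (x * y) x y
  rw [hme x y x y, hme x y y x, key, sub_zero, sub_zero] at h
  exact h
end

section
/- Let ε ∈ {0,1} ⊂ F where char F ≠ 2. Let A^(ε) be the F-vector space with basis {x} ∪ {a_{i,j} : i,j ≥ 0} and multiplication defined on basis elements by: x·x = (ε/2)·a_{0,0}; a_{i,j}·x = a_{i,j+1}; x·a_{i,2j} = (−1)^i (a_{i,2j+1} − a_{i+1,2j}); x·a_{i,2j+1} = ((−1)^i/2)(a_{i,2j+2} − 2a_{i+1,2j+1} + a_{i+2,2j}); all other products of basis elements zero. Then A^(ε) is metabelian: (u·v)·(w·t) = 0 for all u,v,w,t ∈ A^(ε). -/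
/-- Basis of the algebra `A^(ε)`: `none` is the element `x`,
`some (i,j)` is the element `a_{i,j}`. -/
abbrev AeBasis : Type := Option (ℕ × ℕ)

/-- The underlying space of `A^(ε)`: formal `F`-linear combinations of basis elements. -/
abbrev AeSpace (F : Type*) [Field F] : Type _ := AeBasis →₀ F

/-- Product of two basis elements of `A^(ε)`:
`x·x = (ε/2)·a_{0,0}`, `a_{i,j}·x = a_{i,j+1}`,
`x·a_{i,2j} = (−1)^i (a_{i,2j+1} − a_{i+1,2j})`,
`x·a_{i,2j+1} = ((−1)^i/2)(a_{i,2j+2} − 2a_{i+1,2j+1} + a_{i+2,2j})`,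
and all other products of basis elements are zero. -/
noncomputable def mulB (F : Type*) [Field F] (ε : F) : AeBasis → AeBasis → AeSpace F
  | none, none => (ε / 2) • Finsupp.single (some (0, 0)) 1
  | some (i, j), none => Finsupp.single (some (i, j + 1)) 1
  | none, some (i, j) =>
      if j % 2 = 0 then
        ((-1 : F) ^ i) • (Finsupp.single (some (i, j + 1)) (1 : F)
          - Finsupp.single (some (i + 1, j)) 1)
      else
        (((-1 : F) ^ i) / 2) • (Finsupp.single (some (i, j + 1)) (1 : F)
          - (2 : F) • Finsupp.single (some (i + 1, j)) (1 : F)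
          + Finsupp.single (some (i + 2, j - 1)) 1)
  | some _, some _ => 0

/-- The bilinear multiplication of `A^(ε)`, extending `mulB`. -/
noncomputable def mulA (F : Type*) [Field F] (ε : F) (u v : AeSpace F) : AeSpace F :=
  u.sum fun b cb => v.sum fun b' cb' => (cb * cb') • mulB F ε b b'

/-- The generator `x` of `A^(ε)`. -/
noncomputable def xEl (F : Type*) [Field F] : AeSpace F := Finsupp.single none 1

/-- The generator `a_{i,j}` of `A^(ε)`. -/
noncomputable def aEl (F : Type*) [Field F] (i j : ℕ) : AeSpace F :=
  Finsupp.single (some (i, j)) 1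

lemma mulB_apply_none {F : Type*} [Field F] (ε : F) (b b' : AeBasis) :
    mulB F ε b b' none = 0 := by
  rcases b with _ | ⟨i, j⟩ <;> rcases b' with _ | ⟨i', j'⟩ <;>
    simp [mulB, Finsupp.single_apply]
  split <;> simp [Finsupp.single_apply]

lemma mulA_apply_none {F : Type*} [Field F] (ε : F) (u v : AeSpace F) :
    mulA F ε u v none = 0 := by
  unfold mulA
  rw [Finsupp.sum_apply]
  apply Finset.sum_eq_zero
  intro b _
  simp [Finsupp.sum_apply, mulB_apply_none]

lemma mulA_eq_zero_of_none {F : Type*} [Field F] (ε : F) (u v : AeSpace F)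
    (hu : u none = 0) (hv : v none = 0) : mulA F ε u v = 0 := by
  unfold mulA
  apply Finset.sum_eq_zero
  intro b hb
  apply Finset.sum_eq_zero
  intro b' hb'
  have hb1 : b ≠ none := fun h => (Finsupp.mem_support_iff.mp hb) (h ▸ hu)
  have hb2 : b' ≠ none := fun h => (Finsupp.mem_support_iff.mp hb') (h ▸ hv)
  rcases b with _ | p; · exact absurd rfl hb1
  rcases b' with _ | p'; · exact absurd rfl hb2
  simp [mulB]

/-- `A^(ε)` is metabelian. -/
theorem stmt_10 {F : Type*} [Field F] (hchar : (2 : F) ≠ 0)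
    (ε : F) (hε : ε = 0 ∨ ε = 1) (u v w t : AeSpace F) :
    mulA F ε (mulA F ε u v) (mulA F ε w t) = 0 := by
  exact mulA_eq_zero_of_none ε _ _ (mulA_apply_none ε u v) (mulA_apply_none ε w t)
end

section
/- Let A^(ε) be the algebra defined on the basis {x} ∪ {a_{i,j}} with multiplication x·x = (ε/2)a_{0,0}, a_{i,j}·x = a_{i,j+1}, x·a_{i,2j} = (−1)^i(a_{i,2j+1} − a_{i+1,2j}), x·a_{i,2j+1} = ((−1)^i/2)(a_{i,2j+2} − 2a_{i+1,2j+1} + a_{i+2,2j}), other products zero, over a field of characteristic ≠ 2. Then for all i,j ≥ 0: (x·a_{i,j})·x − x·(a_{i,j}·x) = (−1)^{i+j} · x·(x·a_{i,j}). -/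
section Helpers

variable {F : Type*} [Field F] (ε : F)

lemma mulA_eq_left (u v : AeSpace F) : mulA F ε u v =
    Finsupp.lift _ F _ (fun b => Finsupp.lift _ F _ (mulB F ε b) v) u := by
  simp [mulA, Finsupp.lift_apply, Finsupp.smul_sum, mul_smul]

lemma mulA_single_left (b : AeBasis) (v : AeSpace F) :
    mulA F ε (Finsupp.single b 1) v = Finsupp.lift _ F _ (mulB F ε b) v := by
  rw [mulA_eq_left]; simp

lemma xa (i j : ℕ) :
    mulA F ε (xEl F) (aEl F i j) = mulB F ε none (some (i, j)) := by
  rw [xEl, aEl, mulA_single_left]; simp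

lemma ax (i j : ℕ) :
    mulA F ε (aEl F i j) (xEl F) = aEl F i (j + 1) := by
  rw [xEl, aEl, mulA_single_left]; simp [mulB, aEl]

lemma xa_even (i k : ℕ) :
    mulA F ε (xEl F) (aEl F i (2 * k)) =
      ((-1 : F) ^ i) • (aEl F i (2 * k + 1) - aEl F (i + 1) (2 * k)) := by
  rw [xa, mulB, if_pos (by omega)]; rfl

lemma xa_odd (i k : ℕ) :
    mulA F ε (xEl F) (aEl F i (2 * k + 1)) =
      (((-1 : F) ^ i) / 2) • (aEl F i (2 * k + 2) - (2 : F) • aEl F (i + 1) (2 * k + 1)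
        + aEl F (i + 2) (2 * k)) := by
  rw [xa, mulB, if_neg (by omega)]; rfl

lemma mulA_smul_left (c : F) (u v : AeSpace F) :
    mulA F ε (c • u) v = c • mulA F ε u v := by
  rw [mulA_eq_left, mulA_eq_left, map_smul]

lemma mulA_sub_left (u u' v : AeSpace F) :
    mulA F ε (u - u') v = mulA F ε u v - mulA F ε u' v := by
  rw [mulA_eq_left, mulA_eq_left, mulA_eq_left, map_sub]

lemma mulA_add_left (u u' v : AeSpace F) :
    mulA F ε (u + u') v = mulA F ε u v + mulA F ε u' v := by
  rw [mulA_eq_left, mulA_eq_left, mulA_eq_left, map_add]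

lemma mulA_eq_right (u v : AeSpace F) : mulA F ε u v =
    Finsupp.lift _ F _ (fun b' => Finsupp.lift _ F _ (fun b => mulB F ε b b') u) v := by
  simp only [mulA, Finsupp.lift_apply]
  rw [Finsupp.sum_comm]
  apply Finsupp.sum_congr; intro b' _
  rw [Finsupp.smul_sum]
  apply Finsupp.sum_congr; intro b _
  rw [smul_smul, mul_comm]

lemma mulA_smul_right (c : F) (u v : AeSpace F) :
    mulA F ε u (c • v) = c • mulA F ε u v := by
  rw [mulA_eq_right, mulA_eq_right ε u v, map_smul]

lemma mulA_sub_right (u v v' : AeSpace F) :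
    mulA F ε u (v - v') = mulA F ε u v - mulA F ε u v' := by
  rw [mulA_eq_right, mulA_eq_right ε u v, mulA_eq_right ε u v', map_sub]

lemma mulA_add_right (u v v' : AeSpace F) :
    mulA F ε u (v + v') = mulA F ε u v + mulA F ε u v' := by
  rw [mulA_eq_right, mulA_eq_right ε u v, mulA_eq_right ε u v', map_add]

lemma xa' (i j : ℕ) :
    mulA F ε (xEl F) (aEl F i j) =
      if j % 2 = 0 then ((-1 : F) ^ i) • (aEl F i (j + 1) - aEl F (i + 1) j)
      else (((-1 : F) ^ i) / 2) • (aEl F i (j + 1) - (2 : F) • aEl F (i + 1) j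
        + aEl F (i + 2) (j - 1)) := by
  rw [xa, mulB]
  split <;> rfl

end Helpers

/-- `(x·a_{i,j})·x − x·(a_{i,j}·x) = (−1)^{i+j} · x·(x·a_{i,j})`. -/
theorem stmt_11 {F : Type*} [Field F] (hchar : (2 : F) ≠ 0)
    (ε : F) (hε : ε = 0 ∨ ε = 1) (i j : ℕ) :
    mulA F ε (mulA F ε (xEl F) (aEl F i j)) (xEl F)
      - mulA F ε (xEl F) (mulA F ε (aEl F i j) (xEl F))
      = ((-1 : F) ^ (i + j)) • mulA F ε (xEl F) (mulA F ε (xEl F) (aEl F i j)) := by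
  rcases Nat.even_or_odd j with ⟨k, rfl⟩ | ⟨k, rfl⟩ <;>
    rcases Nat.even_or_odd i with ⟨m, rfl⟩ | ⟨m, rfl⟩ <;>
  · try simp only [← two_mul]
    simp only [xa', ax]
    try norm_num [Nat.add_mod, Nat.mul_mod_right]
    try simp only [mulA_smul_left, mulA_smul_right, mulA_sub_left, mulA_sub_right,
      mulA_add_left, mulA_add_right, xa', ax]
    try norm_num [Nat.add_mod, Nat.mul_mod_right]
    try simp only [mulA_smul_left, mulA_smul_right, mulA_sub_left, mulA_sub_right,
      mulA_add_left, mulA_add_right, xa', ax]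
    try norm_num [Nat.add_mod, Nat.mul_mod_right, pow_add, pow_mul, pow_succ]
    match_scalars <;> (field_simp; try ring)
end

section
/- In the superalgebra A^(ε) (basis {x, a_{i,j}}, |x|=1, |a_{i,j}| = i+j mod 2, multiplication: x·x = (ε/2)a_{0,0}, a_{i,j}·x = a_{i,j+1}, x·a_{i,2j} = (−1)^i(a_{i,2j+1}−a_{i+1,2j}), x·a_{i,2j+1} = ((−1)^i/2)(a_{i,2j+2}−2a_{i+1,2j+1}+a_{i+2,2j}), char F ≠ 2), the double supercommutator satisfies [[a_{i,j}, x]_s, x]_s = a_{i+2,j} for all i, j ≥ 0. -/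
noncomputable def rX (F : Type*) [Field F] (ε : F) : AeSpace F →ₗ[F] AeSpace F :=
  Finsupp.lsum F fun b => LinearMap.toSpanSingleton F _ (mulB F ε b none)

noncomputable def lX (F : Type*) [Field F] (ε : F) : AeSpace F →ₗ[F] AeSpace F :=
  Finsupp.lsum F fun b => LinearMap.toSpanSingleton F _ (mulB F ε none b)

lemma mulA_x_right {F : Type*} [Field F] (ε : F) (u : AeSpace F) :
    mulA F ε u (xEl F) = rX F ε u := by
  rw [mulA, rX, Finsupp.lsum_apply]
  refine Finsupp.sum_congr fun b hb => ?_
  rw [xEl, Finsupp.sum_single_index (by simp)]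
  simp [LinearMap.toSpanSingleton_apply]

lemma mulA_x_left {F : Type*} [Field F] (ε : F) (v : AeSpace F) :
    mulA F ε (xEl F) v = lX F ε v := by
  rw [mulA, xEl, Finsupp.sum_single_index (by simp), lX, Finsupp.lsum_apply]
  refine Finsupp.sum_congr fun b hb => ?_
  simp [LinearMap.toSpanSingleton_apply]

lemma rX_single {F : Type*} [Field F] (ε : F) (b : AeBasis) (c : F) :
    rX F ε (Finsupp.single b c) = c • mulB F ε b none := by
  simp [rX, Finsupp.lsum_single, LinearMap.toSpanSingleton_apply]

lemma lX_single {F : Type*} [Field F] (ε : F) (b : AeBasis) (c : F) :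
    lX F ε (Finsupp.single b c) = c • mulB F ε none b := by
  simp [lX, Finsupp.lsum_single, LinearMap.toSpanSingleton_apply]

/-- `[[a_{i,j}, x]ₛ, x]ₛ = a_{i+2,j}`; the inner supercommutator
has parity `i + j + 1 (mod 2)`. -/
theorem stmt_14 {F : Type*} [Field F] (hchar : (2 : F) ≠ 0)
    (ε : F) (hε : ε = 0 ∨ ε = 1) (i j : ℕ) :
    (let c : AeSpace F := mulA F ε (aEl F i j) (xEl F)
        - ((-1 : F) ^ (i + j)) • mulA F ε (xEl F) (aEl F i j);
     mulA F ε c (xEl F) - ((-1 : F) ^ (i + j + 1)) • mulA F ε (xEl F) c)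
      = aEl F (i + 2) j := by
  have e0 : ∀ n : ℕ, (-1 : F) ^ (n + n) = 1 := fun n => by
    rw [← two_mul, pow_mul]; norm_num
  simp only [mulA_x_right, mulA_x_left]
  rcases Nat.even_or_odd j with ⟨k, rfl⟩ | ⟨k, rfl⟩
  · -- j = k + k (even)
    have h0 : (k + k) % 2 = 0 := by omega
    have h1 : (k + k + 1) % 2 = 1 := by omega
    have eA : (-1 : F) ^ (i + (k + k)) = (-1) ^ i := by rw [pow_add, e0, mul_one]
    have eB : (-1 : F) ^ (i + (k + k) + 1) = -(-1) ^ i := by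
      rw [pow_succ, eA, mul_neg_one]
    have eC : (-1 : F) ^ (i + 1) = -(-1) ^ i := by rw [pow_succ, mul_neg_one]
    have n1 : i + 1 + 1 = i + 2 := by omega
    have n2 : k + k + 1 - 1 = k + k := by omega
    simp only [aEl, map_sub, map_smul, map_add, rX_single, lX_single, mulB,
      h0, h1, n1, n2, eA, eB, eC, one_smul, smul_sub, smul_add, smul_smul,
      if_true, if_false, reduceIte, one_ne_zero]
    rcases neg_one_pow_eq_or F i with h | h <;> rw [h] <;> match_scalars <;>
      field_simp <;> ring
  · -- j = 2k+1 (odd)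
    have h0 : (2 * k + 1) % 2 = 1 := by omega
    have h1 : (2 * k + 2) % 2 = 0 := by omega
    have h2 : (2 * k) % 2 = 0 := by omega
    have eA : (-1 : F) ^ (i + (2 * k + 1)) = -(-1) ^ i := by
      rw [pow_add, pow_succ, pow_mul]; norm_num
    have eB : (-1 : F) ^ (i + (2 * k + 1) + 1) = (-1) ^ i := by
      rw [pow_succ, eA]; ring
    have eC : (-1 : F) ^ (i + 1) = -(-1) ^ i := by rw [pow_succ, mul_neg_one]
    have eD : (-1 : F) ^ (i + 2) = (-1) ^ i := by
      rw [pow_add]; norm_num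
    have n1 : i + 1 + 1 = i + 2 := by omega
    have n2 : 2 * k + 1 + 1 = 2 * k + 2 := by omega
    have n3 : 2 * k + 1 - 1 = 2 * k := by omega
    have n4 : 2 * k + 2 - 1 = 2 * k + 1 := by omega
    have n5 : i + 1 + 2 = i + 3 := by omega
    have n6 : i + 2 + 1 = i + 3 := by omega
    have n7 : 2 * k + 2 + 1 = 2 * k + 3 := by omega
    simp only [aEl, map_sub, map_smul, map_add, rX_single, lX_single, mulB,
      h0, h1, h2, n1, n2, n3, n4, n5, n6, n7, eA, eB, eC, eD, one_smul,
      smul_sub, smul_add, smul_smul, if_true, if_false, reduceIte, one_ne_zero]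
    rcases neg_one_pow_eq_or F i with h | h <;> rw [h] <;> match_scalars <;>
      field_simp <;> ring
end
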